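/- Under hypotheses (P1)–(P3) and Kγ/α < 1, if ȳ ≠ 0 is an equilibrium of y' = A(t)y + f(t,y), then G(t,ȳ) = Φ(t,0)ȳ for all t ≥ 0, and consequently G(t,ȳ) → 0 as t → +∞. -/

import Mathlib

open Real MeasureTheory Filter Topology

set_option maxHeartbeats 1000000

lemma clm_hasDerivAt_of_apply {E : Type*} [NormedAddCommGroup E] [NormedSpace ℝ E]
    [FiniteDimensional ℝ E]
    (B : ℝ → E →L[ℝ] E) (D : E →L[ℝ] E) (t : ℝ)
    (h : ∀ ξ : E, HasDerivAt (fun s => B s ξ) (D ξ) t) :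
    HasDerivAt B D t := by
  let b := Module.finBasis ℝ E
  let Ψ : (E →L[ℝ] E) ≃ₗ[ℝ] (Fin (Module.finrank ℝ E) → E) :=
    LinearMap.toContinuousLinearMap.symm.trans (b.constr ℝ).symm
  let Ψc : (E →L[ℝ] E) ≃L[ℝ] (Fin (Module.finrank ℝ E) → E) :=
    Ψ.toContinuousLinearEquiv
  have key : ∀ (T : E →L[ℝ] E) i, Ψc T i = T (b i) := fun T i => rfl
  have h1 : HasDerivAt (fun s => Ψc (B s)) (Ψc D) t := by
    rw [hasDerivAt_pi]
    intro i
    simpa [key] using h (b i)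
  have h2 := (Ψc.symm.hasFDerivAt).comp_hasDerivAt t h1
  simpa [Function.comp_def] using h2

theorem stmt13 (n : ℕ) (K α γ μ M : ℝ)
    (hK : 1 ≤ K) (hα : 0 < α) (hγ : 0 < γ) (hμ : 0 < μ) (hM : 0 < M)
    (A : ℝ → (EuclideanSpace ℝ (Fin n)) →L[ℝ] (EuclideanSpace ℝ (Fin n)))
    (hAcont : Continuous A) (hAbdd : ∀ t, 0 ≤ t → ‖A t‖ ≤ M)
    (Φ : ℝ → ℝ → ((EuclideanSpace ℝ (Fin n)) →L[ℝ] (EuclideanSpace ℝ (Fin n))))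
    (hΦid : ∀ s, Φ s s = ContinuousLinearMap.id ℝ (EuclideanSpace ℝ (Fin n)))
    (hΦderiv : ∀ s ξ t, HasDerivAt (fun r => Φ r s ξ) (A t (Φ t s ξ)) t)
    (hΦcocycle : ∀ t s r, (Φ t s).comp (Φ s r) = Φ t r)
    (hΦdecay : ∀ s t, 0 ≤ s → s ≤ t → ‖Φ t s‖ ≤ K * Real.exp (-α * (t - s)))
    (f : ℝ → (EuclideanSpace ℝ (Fin n)) → (EuclideanSpace ℝ (Fin n)))
    (hfcont : Continuous fun p : ℝ × (EuclideanSpace ℝ (Fin n)) => f p.1 p.2)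
    (hflip : ∀ t u v, 0 ≤ t → ‖f t u - f t v‖ ≤ γ * ‖u - v‖)
    (hfbdd : ∀ t u, 0 ≤ t → ‖f t u‖ ≤ μ)
    (hsmall : K * γ / α < 1)
    (y : ℝ → (EuclideanSpace ℝ (Fin n)) → ℝ → (EuclideanSpace ℝ (Fin n)))
    (hyinit : ∀ τ η, y τ η τ = η)
    (hyderiv : ∀ τ η t, 0 ≤ t → HasDerivAt (y τ η) (A t (y τ η t) + f t (y τ η t)) t)
    (ybar : (EuclideanSpace ℝ (Fin n))) (hne : ybar ≠ 0)
    (hequil : ∀ t, 0 ≤ t → A t ybar + f t ybar = 0) :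
    (∀ t, 0 ≤ t →
      ybar - ∫ s in (0:ℝ)..t, Φ t s (f s (y t ybar s)) = Φ t 0 ybar) ∧
    Tendsto (fun t => ybar - ∫ s in (0:ℝ)..t, Φ t s (f s (y t ybar s)))
      atTop (nhds (0 : (EuclideanSpace ℝ (Fin n)))) := by
  have hΦapply : ∀ t s r (ξ : EuclideanSpace ℝ (Fin n)), Φ t s (Φ s r ξ) = Φ t r ξ := by
    intro t s r ξ
    rw [← hΦcocycle t s r]; rfl
  -- Step 1: backward uniqueness: y t ybar s = ybar on [0,t]
  have hy_eq : ∀ t, 0 ≤ t → ∀ s ∈ Set.Icc (0:ℝ) t, y t ybar s = ybar := by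
    intro t ht
    set v : ℝ → EuclideanSpace ℝ (Fin n) → EuclideanSpace ℝ (Fin n) := fun s x => A (max s 0) x + f (max s 0) x with hv_def
    have hlip : ∀ s : ℝ, LipschitzOnWith (M + γ).toNNReal (v s) Set.univ := by
      intro s
      apply LipschitzWith.lipschitzOnWith
      apply LipschitzWith.of_dist_le_mul
      intro w w'
      have hr : (0:ℝ) ≤ max s 0 := le_max_right _ _
      simp only [dist_eq_norm, Real.coe_toNNReal _ (by positivity : (0:ℝ) ≤ M + γ)]
      have hsplit : v s w - v s w' =
          (A (max s 0) w - A (max s 0) w') + (f (max s 0) w - f (max s 0) w') := by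
        simp only [hv_def]; abel
      have hA1 : ‖A (max s 0) w - A (max s 0) w'‖ ≤ M * ‖w - w'‖ := by
        rw [← map_sub]
        refine le_trans ((A _).le_opNorm _) ?_
        have := hAbdd _ hr
        have h0 : (0:ℝ) ≤ ‖w - w'‖ := norm_nonneg _
        nlinarith [(A (max s 0)).opNorm_nonneg]
      have hf1 : ‖f (max s 0) w - f (max s 0) w'‖ ≤ γ * ‖w - w'‖ := hflip _ _ _ hr
      rw [hsplit]
      refine le_trans (norm_add_le _ _) ?_
      have : M * ‖w - w'‖ + γ * ‖w - w'‖ = (M + γ) * ‖w - w'‖ := by ring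
      linarith
    have hcf : ContinuousOn (y t ybar) (Set.Icc 0 t) := fun s hs =>
      ((hyderiv t ybar s hs.1).continuousAt).continuousWithinAt
    have hf' : ∀ s ∈ Set.Ioc (0:ℝ) t, HasDerivWithinAt (y t ybar) (v s (y t ybar s)) (Set.Iic s) s := by
      intro s hs
      have h := (hyderiv t ybar s hs.1.le).hasDerivWithinAt (s := Set.Iic s)
      simpa [hv_def, max_eq_left hs.1.le] using h
    have hg' : ∀ s ∈ Set.Ioc (0:ℝ) t, HasDerivWithinAt (fun _ : ℝ => ybar) (v s ybar) (Set.Iic s) s := by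
      intro s hs
      have h0 : v s ybar = 0 := by simpa [hv_def, max_eq_left hs.1.le] using hequil s hs.1.le
      rw [h0]
      exact hasDerivWithinAt_const _ _ _
    have := ODE_solution_unique_of_mem_Icc_left (v := v) (s := fun _ => Set.univ)
      (K := (M + γ).toNNReal) (fun s _ => hlip s) hcf hf' (fun _ _ => Set.mem_univ _)
      continuousOn_const hg' (fun _ _ => Set.mem_univ _) (by simpa using hyinit t ybar)
    exact fun s hs => this hs
  -- Step 2: derivatives of s ↦ Φ s 0 and s ↦ Φ 0 s
  have hB : ∀ s : ℝ, HasDerivAt (fun r => Φ r 0) ((A s).comp (Φ s 0)) s := fun s =>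
    clm_hasDerivAt_of_apply _ _ s (fun ξ => hΦderiv 0 ξ s)
  have hone : ∀ s : ℝ, Φ s 0 * Φ 0 s = 1 := by
    intro s
    ext ξ
    simp only [ContinuousLinearMap.mul_apply, ContinuousLinearMap.one_apply, hΦapply, hΦid]
    rfl
  have hone' : ∀ s : ℝ, Φ 0 s * Φ s 0 = 1 := by
    intro s
    ext ξ
    simp only [ContinuousLinearMap.mul_apply, ContinuousLinearMap.one_apply, hΦapply, hΦid]
    rfl
  let u : ℝ → (EuclideanSpace ℝ (Fin n) →L[ℝ] EuclideanSpace ℝ (Fin n))ˣ := fun s =>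
    { val := Φ s 0, inv := Φ 0 s, val_inv := hone s, inv_val := hone' s }
  have hInv : ∀ s : ℝ, HasDerivAt (fun r => Φ 0 r) (-((Φ 0 s).comp (A s))) s := by
    intro s
    have h1 := (hasFDerivAt_ringInverse (𝕜 := ℝ) (u s)).comp_hasDerivAt s (hB s)
    rw [Function.comp_def] at h1
    have heq : (fun r => Ring.inverse (Φ r 0)) = fun r => Φ 0 r :=
      funext fun r => Ring.inverse_unit (u r)
    rw [show (fun r => Ring.inverse ((fun r => Φ r 0) r)) = fun r => Φ 0 r from heq] at h1
    refine h1.congr_deriv (Eq.symm ?_)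
    refine ContinuousLinearMap.ext fun ξ => ?_
    have hus : (↑(u s)⁻¹ : EuclideanSpace ℝ (Fin n) →L[ℝ] EuclideanSpace ℝ (Fin n)) = Φ 0 s := rfl
    simp only [ContinuousLinearMap.neg_apply, ContinuousLinearMap.coe_comp',
      Function.comp_apply, ContinuousLinearMap.mulLeftRight_apply,
      ContinuousLinearMap.mul_apply, hus]
    rw [hΦapply, hΦid]
    rfl
  have hΦ0diff : Differentiable ℝ (fun s => Φ 0 s) := fun s => (hInv s).differentiableAt
  have hΦ0cont : Continuous (fun s => Φ 0 s) := hΦ0diff.continuous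
  -- Step 3: FTC identity for each t ≥ 0
  have main : ∀ t, 0 ≤ t →
      ybar - ∫ s in (0:ℝ)..t, Φ t s (f s (y t ybar s)) = Φ t 0 ybar := by
    intro t ht
    have hintcong : ∫ s in (0:ℝ)..t, Φ t s (f s (y t ybar s))
        = ∫ s in (0:ℝ)..t, Φ t s (f s ybar) := by
      apply intervalIntegral.integral_congr
      intro s hs
      rw [Set.uIcc_of_le ht] at hs
      show Φ t s (f s (y t ybar s)) = Φ t s (f s ybar)
      rw [hy_eq t ht s hs]
    -- p s = Φ t 0 (Φ 0 s ybar) = Φ t s ybar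
    have hp : ∀ s ∈ Set.uIcc (0:ℝ) t,
        HasDerivAt (fun s => Φ t 0 (Φ 0 s ybar)) (Φ t s (f s ybar)) s := by
      intro s hs
      rw [Set.uIcc_of_le ht] at hs
      have h1 : HasDerivAt (fun r => Φ 0 r ybar) (-(Φ 0 s (A s ybar))) s := by
        have := (hInv s).clm_apply (hasDerivAt_const s ybar)
        simpa using this
      have h2 := ((Φ t 0).hasFDerivAt).comp_hasDerivAt s h1
      rw [Function.comp_def] at h2
      have hAf : A s ybar = -(f s ybar) := by
        have := hequil s hs.1
        linear_combination (norm := module) this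
      have : Φ t 0 (-(Φ 0 s (A s ybar))) = Φ t s (f s ybar) := by
        rw [hAf]
        simp only [map_neg, neg_neg]
        rw [hΦapply]
      rwa [this] at h2
    have hcont : Continuous (fun s => Φ t s (f s ybar)) := by
      have hfc : Continuous (fun s => f s ybar) :=
        hfcont.comp (continuous_id.prodMk continuous_const)
      have : Continuous (fun s => Φ 0 s (f s ybar)) := hΦ0cont.clm_apply hfc
      have h2 : Continuous (fun s => Φ t 0 (Φ 0 s (f s ybar))) :=
        (Φ t 0).continuous.comp this
      convert h2 using 2 with s
      rw [hΦapply]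
    have hftc := intervalIntegral.integral_eq_sub_of_hasDerivAt hp
      (hcont.intervalIntegrable 0 t)
    rw [hintcong, hftc]
    have e1 : Φ t 0 (Φ 0 t ybar) = ybar := by rw [hΦapply, hΦid]; rfl
    have e2 : Φ t 0 (Φ 0 0 ybar) = Φ t 0 ybar := by rw [hΦid]; rfl
    rw [e1, e2, sub_sub_cancel]
  refine ⟨main, ?_⟩
  -- Step 4: decay
  have hbound : ∀ᶠ t in atTop,
      ‖ybar - ∫ s in (0:ℝ)..t, Φ t s (f s (y t ybar s))‖ ≤ (K * ‖ybar‖) * Real.exp (-α * t) := by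
    filter_upwards [eventually_ge_atTop (0:ℝ)] with t ht
    rw [main t ht]
    calc ‖Φ t 0 ybar‖ ≤ ‖Φ t 0‖ * ‖ybar‖ := (Φ t 0).le_opNorm _
      _ ≤ (K * Real.exp (-α * (t - 0))) * ‖ybar‖ := by
          gcongr; exact hΦdecay 0 t le_rfl ht
      _ = (K * ‖ybar‖) * Real.exp (-α * t) := by rw [sub_zero]; ring
  have h1 : Tendsto (fun t : ℝ => -α * t) atTop atBot :=
    Tendsto.const_mul_atTop_of_neg (by linarith) tendsto_id
  have h2 : Tendsto (fun t : ℝ => Real.exp (-α * t)) atTop (nhds 0) :=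
    Real.tendsto_exp_atBot.comp h1
  have hlim : Tendsto (fun t : ℝ => (K * ‖ybar‖) * Real.exp (-α * t)) atTop (nhds 0) := by
    simpa using h2.const_mul (K * ‖ybar‖)
  exact squeeze_zero_norm' hbound hlim
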